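/- Let Γ_t be the p×p companion matrix of the equation y_t = Σ_{i=1}^p φ_i(t) y_{t−i} (first row (φ_1(t),...,φ_p(t)), subdiagonal of ones, zeros elsewhere), and let F_{t,s} = Γ_t Γ_{t−1} ··· Γ_{s+1} be the product of companion matrices. Then the (i,j)-entry of F_{t,s} equals ξ^{(j)}_{t−i+1,s}; in particular the top-left entry of F_{t,s} (the Green's function H(t,s)) equals the principal determinant ξ_{t,s} = det(Φ^{(1)}_{t,s}). -/
import Mathlib


/-- The `k × k` banded lower Hessenberg matrix `Φ^{(m)}_{t,s}` (here `k = t - s`),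
0-indexed: superdiagonal entries are `-1`; first-column entries (row `i`, 0-indexed) are
`φ_{i+m}(s+i+1)` when `i + m ≤ p` and `0` otherwise; for columns `j ≥ 1` (0-indexed) the
`(i,j)` entry is `φ_{i-j+1}(s+i+1)` when `j ≤ i` and `i - j + 1 ≤ p`, and `0` otherwise. -/
def Phi (p : ℕ) (φ : ℕ → ℤ → ℂ) (m : ℕ) (s : ℤ) (k : ℕ) :
    Matrix (Fin k) (Fin k) ℂ :=
  Matrix.of fun i j =>
    if (j : ℕ) = (i : ℕ) + 1 then -1
    else if (j : ℕ) = 0 then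
      (if (i : ℕ) + m ≤ p then φ ((i : ℕ) + m) (s + (i : ℕ) + 1) else 0)
    else if (j : ℕ) ≤ (i : ℕ) then
      (if (i : ℕ) - (j : ℕ) + 1 ≤ p then φ ((i : ℕ) - (j : ℕ) + 1) (s + (i : ℕ) + 1)
        else 0)
    else 0

/-- The fundamental solution `ξ^{(m)}_{t,s}`: the banded Hessenbergian
`det(Φ^{(m)}_{t,s})` for `t > s`; `1` for `t = s - m + 1`; `0` for other
`t ∈ [s - p + 1, s]`. -/
def xi (p : ℕ) (φ : ℕ → ℤ → ℂ) (m : ℕ) (s t : ℤ) : ℂ :=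
  if s < t then (Phi p φ m s (t - s).toNat).det
  else if t = s - (m : ℤ) + 1 then 1 else 0

/-- The companion matrix `Γ_u` (0-indexed): first row `(φ_1(u), ..., φ_p(u))`,
subdiagonal of ones, zeros elsewhere. -/
def Gamma (p : ℕ) (φ : ℕ → ℤ → ℂ) (u : ℤ) : Matrix (Fin p) (Fin p) ℂ :=
  Matrix.of fun i j =>
    if (i : ℕ) = 0 then φ ((j : ℕ) + 1) u
    else if (i : ℕ) = (j : ℕ) + 1 then 1 else 0

/-- `F_{s+k,s} = Γ_{s+k} Γ_{s+k-1} ⋯ Γ_{s+1}` (product in decreasing order of the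
argument from the left), as a function of `k = t - s`. -/
noncomputable def Fmat (p : ℕ) (φ : ℕ → ℤ → ℂ) (s : ℤ) : ℕ → Matrix (Fin p) (Fin p) ℂ
  | 0 => 1
  | k + 1 => Gamma p φ (s + (k : ℤ) + 1) * Fmat p φ s k


lemma phi_det_zero_col (p : ℕ) (φ : ℕ → ℤ → ℂ) (s : ℤ) (n : ℕ) :
    (Phi p φ (p+1) s (n+1)).det = 0 := by
  apply Matrix.det_eq_zero_of_column_eq_zero 0
  intro i
  simp only [Phi, Matrix.of_apply, Fin.val_zero]
  have h1 : ¬ ((0:ℕ) = (i:ℕ) + 1) := by omega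
  have h2 : ¬ ((i:ℕ) + (p+1) ≤ p) := by omega
  simp [h1, h2]

lemma phi_det_rec (p : ℕ) (φ : ℕ → ℤ → ℂ) (m : ℕ) (s : ℤ) (n : ℕ) :
    (Phi p φ m s (n+2)).det =
      (if m ≤ p then φ m (s+1) else 0) * (Phi p φ 1 (s+1) (n+1)).det
        + (Phi p φ (m+1) (s+1) (n+1)).det := by
  rw [Matrix.det_succ_row_zero, Fin.sum_univ_succ, Fin.sum_univ_succ]
  have hrest : ∀ j : Fin n, (-1:ℂ) ^ ((j.succ.succ : Fin (n+2)) : ℕ)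
      * Phi p φ m s (n+2) 0 j.succ.succ
      * ((Phi p φ m s (n+2)).submatrix Fin.succ (Fin.succAbove j.succ.succ)).det = 0 := by
    intro j
    have : Phi p φ m s (n+2) 0 j.succ.succ = 0 := by
      simp only [Phi, Matrix.of_apply, Fin.val_zero, Fin.val_succ]
      have h1 : ¬ ((j:ℕ) + 1 + 1 = 0 + 1) := by omega
      have h2 : ¬ ((j:ℕ) + 1 + 1 = 0) := by omega
      have h3 : ¬ ((j:ℕ) + 1 + 1 ≤ 0) := by omega
      simp [h1, h2, h3]
    rw [this]; ring
  rw [Finset.sum_congr rfl (fun j _ => hrest j), Finset.sum_const_zero, add_zero]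
  have e00 : Phi p φ m s (n+2) 0 0 = (if m ≤ p then φ m (s+1) else 0) := by
    simp only [Phi, Matrix.of_apply, Fin.val_zero]
    norm_num
  have e01 : Phi p φ m s (n+2) 0 1 = -1 := by
    simp [Phi]
  have m0 : (Phi p φ m s (n+2)).submatrix Fin.succ (Fin.succAbove 0) = Phi p φ 1 (s+1) (n+1) := by
    ext i j
    simp only [Matrix.submatrix_apply, Fin.succAbove_zero, Phi, Matrix.of_apply, Fin.val_succ]
    by_cases h1 : (j:ℕ) = (i:ℕ) + 1
    · simp [h1]
    · have h1' : ¬ ((j:ℕ) + 1 = (i:ℕ) + 1 + 1) := by omega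
      simp only [h1, h1', if_false]
      by_cases h2 : (j:ℕ) = 0
      · have : ¬ ((j:ℕ) + 1 = 0) := by omega
        simp only [h2, this, if_false, if_true]
        have h3 : (1:ℕ) ≤ (i:ℕ) + 1 := by omega
        have h4 : (i:ℕ) + 1 - 1 + 1 = (i:ℕ) + 1 := by omega
        simp only [h3, if_true, h4]
        have : s + ((i:ℕ)+1 : ℕ) + 1 = s + 1 + (i:ℕ) + 1 := by push_cast; ring
        rw [this]; norm_num
      · have h2' : ¬ ((j:ℕ) + 1 = 0) := by omega
        simp only [h2, h2', if_false]
        by_cases h3 : (j:ℕ) ≤ (i:ℕ)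
        · have h3' : (j:ℕ) + 1 ≤ (i:ℕ) + 1 := by omega
          have h4 : (i:ℕ) + 1 - ((j:ℕ)+1) = (i:ℕ) - (j:ℕ) := by omega
          simp only [h3, h3', if_true, h4]
          have : s + ((i:ℕ)+1 : ℕ) + 1 = s + 1 + (i:ℕ) + 1 := by push_cast; ring
          rw [this]
        · have h3' : ¬ ((j:ℕ) + 1 ≤ (i:ℕ) + 1) := by omega
          simp [h3, h3']
  have m1 : (Phi p φ m s (n+2)).submatrix Fin.succ (Fin.succAbove 1) = Phi p φ (m+1) (s+1) (n+1) := by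
    ext i j
    have hsa : ((Fin.succAbove 1 j : Fin (n+2)) : ℕ) = if (j:ℕ) = 0 then 0 else (j:ℕ) + 1 := by
      rcases Fin.eq_zero_or_eq_succ j with h | ⟨j', rfl⟩
      · subst h
        simp [Fin.succAbove, Fin.lt_def]
      · have : ¬ ((j'.succ : Fin (n+1)) : ℕ) = 0 := by simp
        simp only [this, if_false]
        simp [Fin.succAbove, Fin.lt_def]
    simp only [Matrix.submatrix_apply, Phi, Matrix.of_apply, Fin.val_succ, hsa]
    by_cases h2 : (j:ℕ) = 0
    · simp only [h2, if_true]
      have h1 : ¬ ((0:ℕ) = (i:ℕ) + 1 + 1) := by omega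
      have h1' : ¬ ((0:ℕ) = (i:ℕ) + 1) := by omega
      simp only [h1, h1', if_false, if_true, eq_self_iff_true]
      have hc : (i:ℕ) + 1 + m = (i:ℕ) + (m+1) := by omega
      rw [hc]
      by_cases hle : (i:ℕ) + (m+1) ≤ p
      · simp only [hle, if_true]
        have : s + ((i:ℕ)+1 : ℕ) + 1 = s + 1 + (i:ℕ) + 1 := by push_cast; ring
        rw [this]
      · simp [hle]
    · simp only [h2, if_false]
      by_cases h1 : (j:ℕ) = (i:ℕ) + 1
      · have : (j:ℕ) + 1 = (i:ℕ) + 1 + 1 := by omega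
        simp [h1, this]
      · have h1' : ¬ ((j:ℕ) + 1 = (i:ℕ) + 1 + 1) := by omega
        have h1'' : ¬ ((j:ℕ) + 1 = 0) := by omega
        simp only [h1, h1', h1'', if_false]
        by_cases h3 : (j:ℕ) ≤ (i:ℕ)
        · have h3' : (j:ℕ) + 1 ≤ (i:ℕ) + 1 := by omega
          have h4 : (i:ℕ) + 1 - ((j:ℕ)+1) = (i:ℕ) - (j:ℕ) := by omega
          simp only [h3, h3', if_true, h4]
          have : s + ((i:ℕ)+1 : ℕ) + 1 = s + 1 + (i:ℕ) + 1 := by push_cast; ring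
          rw [this]
        · have h3' : ¬ ((j:ℕ) + 1 ≤ (i:ℕ) + 1) := by omega
          simp [h3, h3']
  rw [Fin.succ_zero_eq_one, e00, e01, m0, m1]
  simp

lemma xi_rec (p : ℕ) (φ : ℕ → ℤ → ℂ) (m : ℕ) (hm : 1 ≤ m) (s t : ℤ) (ht : s < t) :
    xi p φ m s t = (if m ≤ p then φ m (s+1) else 0) * xi p φ 1 (s+1) t
      + xi p φ (m+1) (s+1) t := by
  rcases eq_or_lt_of_le (by omega : s + 1 ≤ t) with h | h
  · have h1 : (t - s).toNat = 1 := by omega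
    have hns : ¬ (s + 1 < t) := by omega
    have hc1 : t = s + 1 - ((1:ℕ):ℤ) + 1 := by push_cast; omega
    have hc2 : ¬ (t = s + 1 - ((m+1:ℕ):ℤ) + 1) := by push_cast; omega
    rw [xi, if_pos ht, h1, xi, if_neg hns, if_pos hc1, xi, if_neg hns, if_neg hc2]
    rw [Matrix.det_fin_one]
    simp [Phi]
  · obtain ⟨n, h2⟩ : ∃ n, (t - s).toNat = n + 2 := ⟨(t - s - 2).toNat, by omega⟩
    have h3 : (t - (s+1)).toNat = n + 1 := by omega
    rw [xi, if_pos ht, h2, phi_det_rec, xi, if_pos h, xi, if_pos h, h3]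

lemma xi_top (p : ℕ) (hp : 1 ≤ p) (φ : ℕ → ℤ → ℂ) (s t : ℤ) (hst : s ≤ t) :
    xi p φ (p+1) s t = 0 := by
  rcases eq_or_lt_of_le hst with h | h
  · rw [xi, if_neg (by omega), if_neg (by push_cast; omega)]
  · obtain ⟨n, h2⟩ : ∃ n, (t - s).toNat = n + 1 := ⟨(t - s - 1).toNat, by omega⟩
    rw [xi, if_pos h, h2, phi_det_zero_col]

lemma Fmat_succ_right (p : ℕ) (φ : ℕ → ℤ → ℂ) : ∀ (k : ℕ) (s : ℤ),
    Fmat p φ s (k+1) = Fmat p φ (s+1) k * Gamma p φ (s+1)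
  | 0, s => by simp [Fmat]
  | (k+1), s => by
    rw [show Fmat p φ s (k+1+1) = Gamma p φ (s + ((k+1:ℕ):ℤ) + 1) * Fmat p φ s (k+1) from rfl,
      Fmat_succ_right p φ k s, ← mul_assoc]
    congr 1
    rw [show Fmat p φ (s+1) (k+1) = Gamma p φ ((s+1) + ((k:ℕ):ℤ) + 1) * Fmat p φ (s+1) k from rfl]
    congr 2
    push_cast; ring

lemma key (p : ℕ) (hp : 1 ≤ p) (φ : ℕ → ℤ → ℂ) : ∀ (k : ℕ) (s : ℤ) (i j : Fin p),
    Fmat p φ s k i j = xi p φ ((j:ℕ)+1) s (s + (k:ℤ) - (i:ℕ))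
  | 0, s, i, j => by
    rw [show Fmat p φ s 0 = 1 from rfl, Matrix.one_apply, xi,
      if_neg (by omega : ¬ (s < s + ((0:ℕ):ℤ) - ((i:ℕ):ℤ)))]
    by_cases h : i = j
    · rw [if_pos h, if_pos (by subst h; push_cast; ring)]
    · rw [if_neg h, if_neg ?_]
      intro hc
      exact h (Fin.ext (by omega))
  | (k+1), s, i, j => by
    rw [Fmat_succ_right, Matrix.mul_apply]
    have hG : ∀ l : Fin p, Gamma p φ (s+1) l j
        = (if l = (⟨0, hp⟩ : Fin p) then φ ((j:ℕ)+1) (s+1) else 0)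
          + (if (l:ℕ) = (j:ℕ)+1 then (1:ℂ) else 0) := by
      intro l
      simp only [Gamma, Matrix.of_apply]
      by_cases h0 : (l:ℕ) = 0
      · have hl : l = ⟨0, hp⟩ := Fin.ext h0
        rw [if_pos h0, if_pos hl, if_neg (by omega : ¬ ((l:ℕ) = (j:ℕ)+1)), add_zero]
      · have hl : ¬ l = ⟨0, hp⟩ := fun hh => h0 (by rw [hh])
        rw [if_neg h0, if_neg hl, zero_add]
    simp only [hG, mul_add, Finset.sum_add_distrib, mul_ite, mul_one, mul_zero]
    rw [Finset.sum_ite_eq' Finset.univ (⟨0, hp⟩ : Fin p)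
      (fun l => Fmat p φ (s+1) k i l * φ ((j:ℕ)+1) (s+1)), if_pos (Finset.mem_univ _)]
    have e0 : Fmat p φ (s+1) k i ⟨0, hp⟩ = xi p φ 1 (s+1) (s + 1 + (k:ℤ) - (i:ℕ)) :=
      key p hp φ k (s+1) i ⟨0, hp⟩
    have harg : s + 1 + (k:ℤ) - ((i:ℕ):ℤ) = s + ((k+1:ℕ):ℤ) - ((i:ℕ):ℤ) := by
      push_cast; ring
    by_cases hik : (i:ℕ) ≤ k
    · have hlt : s < s + ((k+1:ℕ):ℤ) - ((i:ℕ):ℤ) := by push_cast; omega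
      rw [xi_rec p φ ((j:ℕ)+1) (by omega) s _ hlt, if_pos (by omega : (j:ℕ)+1 ≤ p)]
      rw [e0, harg]
      by_cases hj : (j:ℕ)+1 < p
      · have hcond : ∀ l : Fin p, ((l:ℕ) = (j:ℕ)+1) = (l = ⟨(j:ℕ)+1, hj⟩) := by
          intro l; rw [Fin.ext_iff]
        simp only [hcond]
        rw [Finset.sum_ite_eq' Finset.univ (⟨(j:ℕ)+1, hj⟩ : Fin p)
          (fun l => Fmat p φ (s+1) k i l), if_pos (Finset.mem_univ _)]
        rw [key p hp φ k (s+1) i ⟨(j:ℕ)+1, hj⟩, harg]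
        ring
      · have hjp : (j:ℕ)+1 = p := by omega
        rw [Finset.sum_eq_zero (fun l _ => by
          rw [if_neg (by omega : ¬ ((l:ℕ) = (j:ℕ)+1))])]
        rw [show (j:ℕ)+1+1 = p+1 by omega, xi_top p hp φ (s+1) _ (by omega)]
        ring
    · have hle : s + ((k+1:ℕ):ℤ) - ((i:ℕ):ℤ) ≤ s := by push_cast; omega
      rw [e0, xi, if_neg (by omega), if_neg (by push_cast; omega), zero_mul, zero_add]
      rw [xi, if_neg (by omega)]
      by_cases hj : (j:ℕ)+1 < p
      · have hcond : ∀ l : Fin p, ((l:ℕ) = (j:ℕ)+1) = (l = ⟨(j:ℕ)+1, hj⟩) := by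
          intro l; rw [Fin.ext_iff]
        simp only [hcond]
        rw [Finset.sum_ite_eq' Finset.univ (⟨(j:ℕ)+1, hj⟩ : Fin p)
          (fun l => Fmat p φ (s+1) k i l), if_pos (Finset.mem_univ _)]
        rw [key p hp φ k (s+1) i ⟨(j:ℕ)+1, hj⟩, xi, if_neg (by omega)]
        by_cases hc : s + ((k+1:ℕ):ℤ) - ((i:ℕ):ℤ) = s - (((j:ℕ)+1:ℕ):ℤ) + 1
        · rw [if_pos hc, if_pos (by push_cast at hc ⊢; omega)]
        · rw [if_neg hc, if_neg (by push_cast at hc ⊢; omega)]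
      · rw [Finset.sum_eq_zero (fun l _ => by
          rw [if_neg (by omega : ¬ ((l:ℕ) = (j:ℕ)+1))])]
        rw [if_neg ?_]
        have hi : (i:ℕ) < p := i.isLt
        push_cast
        omega

/-- The `(i,j)` entry of the product of companion matrices `F_{t,s}` equals
`ξ^{(j)}_{t-i+1,s}` (1-indexed); in particular the top-left entry, the Green's function
`H(t,s)`, equals the principal determinant `ξ_{t,s} = det(Φ^{(1)}_{t,s})`. -/
theorem stmt17 (p : ℕ) (hp : 1 ≤ p) (φ : ℕ → ℤ → ℂ) (s t : ℤ) (ht : s < t) :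
    (∀ i j : Fin p,
      Fmat p φ s (t - s).toNat i j = xi p φ ((j : ℕ) + 1) s (t - (i : ℕ))) ∧
    Fmat p φ s (t - s).toNat ⟨0, hp⟩ ⟨0, hp⟩ = xi p φ 1 s t := by
  have hts : ((t - s).toNat : ℤ) = t - s := by omega
  have main : ∀ i j : Fin p,
      Fmat p φ s (t - s).toNat i j = xi p φ ((j : ℕ) + 1) s (t - (i : ℕ)) := by
    intro i j
    rw [key p hp φ ((t - s).toNat) s i j,
      show s + (((t - s).toNat : ℕ) : ℤ) - ((i:ℕ):ℤ) = t - ((i:ℕ):ℤ) by omega]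
  refine ⟨main, ?_⟩
  have := main ⟨0, hp⟩ ⟨0, hp⟩
  simpa using this
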